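/- Let H : ℤ → M_q(ℂ) be an almost periodic sequence with every H(n) invertible, let Φ be a fundamental matrix of φ(n+1) = H(n)φ(n), and assume the difference equation has an exponential dichotomy with data (Π, K, ρ). Let h : ℤ → ℂ^q be an almost periodic sequence. Then for every n ∈ ℤ the series c(n) = Σ_{k∈ℤ} 𝒢(n,k) h(k) converges absolutely, the sequence c is the unique bounded solution of c(n+1) = H(n)c(n) + h(n), c is almost periodic, and sup_{n∈ℤ}|c(n)| ≤ (2K/(1−ρ)) · sup_{n∈ℤ}|h(n)|. -/

import Mathlib

open scoped Matrix
open MeasureTheory Filter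

attribute [local instance] Matrix.frobeniusSeminormedAddCommGroup
  Matrix.frobeniusNormedAddCommGroup Matrix.frobeniusNormedSpace
  Matrix.frobeniusNormedRing Matrix.frobeniusNormedAlgebra Matrix.frobeniusIsBoundedSMul

noncomputable section

abbrev Mat (q : ℕ) := Matrix (Fin q) (Fin q) ℂ
abbrev Vec (q : ℕ) := EuclideanSpace ℂ (Fin q)

/-- Action of a `q × q` complex matrix on `ℂ^q` with the Euclidean norm. -/
def aMul {q : ℕ} (M : Mat q) (v : Vec q) : Vec q := Matrix.toEuclideanLin M v

/-- A set of reals is relatively dense. -/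
def RelDenseR (E : Set ℝ) : Prop :=
  ∃ l : ℝ, 0 < l ∧ ∀ m : ℝ, (E ∩ Set.Icc m (m + l)).Nonempty

/-- A set of integers is relatively dense in `ℤ`. -/
def RelDenseZ (E : Set ℤ) : Prop :=
  ∃ l : ℤ, 0 < l ∧ ∀ m : ℤ, (E ∩ Set.Icc m (m + l)).Nonempty

/-- Almost periodic (continuous) function on `ℝ`. -/
def APR {E : Type*} [NormedAddCommGroup E] (g : ℝ → E) : Prop :=
  Continuous g ∧ ∀ ε : ℝ, 0 < ε →
    RelDenseR {τ : ℝ | ∀ t : ℝ, ‖g (t + τ) - g t‖ ≤ ε}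

/-- Almost periodic sequence on `ℤ`. -/
def APZ {E : Type*} [NormedAddCommGroup E] (x : ℤ → E) : Prop :=
  ∀ ε : ℝ, 0 < ε → RelDenseZ {τ : ℤ | ∀ n : ℤ, ‖x (n + τ) - x n‖ ≤ ε}

/-- The family `t_n^{(k)} = t_{n+k} - t_n` is equipotentially almost periodic. -/
def EquiAP (ts : ℤ → ℝ) : Prop :=
  ∀ ε : ℝ, 0 < ε → RelDenseZ {T : ℤ | ∀ k n : ℤ,
    |(ts (T + n + k) - ts (T + n)) - (ts (n + k) - ts n)| ≤ ε}

/-- The Green matrix of an exponential dichotomy for `φ(n+1) = H(n)φ(n)` with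
fundamental matrix `Φ` and projection `P`. -/
def green {q : ℕ} (Φ : ℤ → Mat q) (P : Mat q) (n k : ℤ) : Mat q :=
  if k < n then Φ n * P * (Φ (k + 1))⁻¹ else -(Φ n * (1 - P) * (Φ (k + 1))⁻¹)


variable {q : ℕ}

lemma aMul_norm_le (M : Mat q) (v : Vec q) : ‖aMul M v‖ ≤ ‖M‖ * ‖v‖ := by
  have h1 : ∀ w : Vec q, ‖w‖ = ‖Matrix.replicateCol (Fin 1) ((WithLp.equiv 2 _) w)‖ := by
    intro w; rw [Matrix.frobenius_norm_def, EuclideanSpace.norm_eq]; simp [Matrix.replicateCol_apply, Real.sqrt_eq_rpow]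
  rw [h1 (aMul M v), h1 v]
  have h2 : (WithLp.equiv 2 _) (aMul M v) = M *ᵥ ((WithLp.equiv 2 _) v) := rfl
  rw [h2, Matrix.replicateCol_mulVec]
  exact Matrix.frobenius_norm_mul _ _

lemma aMul_mul (A B : Mat q) (v : Vec q) : aMul (A * B) v = aMul A (aMul B v) := by
  simp [aMul, Matrix.toEuclideanLin_apply, Matrix.mulVec_mulVec]

lemma aMul_one (v : Vec q) : aMul 1 v = v := by
  simp [aMul, Matrix.toEuclideanLin_apply, Matrix.one_mulVec]

lemma aMul_add (A B : Mat q) (v : Vec q) : aMul (A + B) v = aMul A v + aMul B v := by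
  simp [aMul, map_add]

lemma aMul_sub (A B : Mat q) (v : Vec q) : aMul (A - B) v = aMul A v - aMul B v := by
  simp [aMul, map_sub]

lemma aMul_neg (A : Mat q) (v : Vec q) : aMul (-A) v = -(aMul A v) := by
  simp [aMul, map_neg]

lemma aMul_zero (v : Vec q) : aMul 0 v = 0 := by simp [aMul, map_zero]

lemma aMul_v_sub (A : Mat q) (v w : Vec q) : aMul A (v - w) = aMul A v - aMul A w := by
  simp [aMul, map_sub]

def aCLM (M : Mat q) : Vec q →L[ℂ] Vec q :=
  LinearMap.toContinuousLinearMap (Matrix.toEuclideanLin M)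

lemma aCLM_apply (M : Mat q) (v : Vec q) : aCLM M v = aMul M v := rfl

lemma summable_natAbs {ρ : ℝ} (hρ0 : 0 ≤ ρ) (hρ1 : ρ < 1) :
    Summable (fun j : ℤ => ρ ^ j.natAbs) := by
  apply Summable.of_nat_of_neg
  · simpa using summable_geometric_of_lt_one hρ0 hρ1
  · simpa using summable_geometric_of_lt_one hρ0 hρ1

lemma tsum_natAbs_le {ρ : ℝ} (hρ0 : 0 ≤ ρ) (hρ1 : ρ < 1) :
    ∑' j : ℤ, ρ ^ j.natAbs ≤ 2 / (1 - ρ) := by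
  have h1 : Summable (fun n : ℕ => ρ ^ n) := summable_geometric_of_lt_one hρ0 hρ1
  have h2 : (fun n : ℕ => ρ ^ ((n : ℤ)).natAbs) = fun n : ℕ => ρ ^ n := by
    funext n; simp
  have h3 : (fun n : ℕ => ρ ^ ((-(n : ℤ))).natAbs) = fun n : ℕ => ρ ^ n := by
    funext n; simp
  rw [Summable.tsum_of_nat_of_neg (by rw [h2]; exact h1) (by rw [h3]; exact h1), h2, h3,
    tsum_geometric_of_lt_one hρ0 hρ1]
  have hpos : 0 < 1 - ρ := by linarith
  have : (0:ℝ) ≤ ρ ^ (0:ℤ).natAbs := by positivity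
  rw [div_eq_mul_inv]
  have h0 : ρ ^ (0:ℤ).natAbs = 1 := by norm_num
  rw [h0]
  have hi : 1 ≤ (1 - ρ)⁻¹ := by
    rw [le_inv_comm₀ one_pos hpos]; linarith
  nlinarith [inv_pos.mpr hpos]

lemma green_succ (Φ H : ℤ → Mat q) (P : Mat q)
    (hΦinv : ∀ n : ℤ, IsUnit (Φ n)) (hΦ : ∀ n : ℤ, Φ (n + 1) = H n * Φ n) (n k : ℤ) :
    green Φ P (n + 1) k = H n * green Φ P n k + (if k = n then 1 else 0) := by
  rcases lt_trichotomy k n with hk | hk | hk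
  · rw [green, green, if_pos hk, if_pos (hk.trans (by linarith)), if_neg hk.ne]
    rw [add_zero, hΦ]
    simp only [Matrix.mul_assoc]
  · subst hk
    rw [green, green, if_pos (by linarith), if_neg (lt_irrefl k), if_pos rfl]
    have hu : Φ (k + 1) * (Φ (k + 1))⁻¹ = 1 :=
      Matrix.mul_nonsing_inv _ ((Matrix.isUnit_iff_isUnit_det _).mp (hΦinv (k + 1)))
    have e1 : H k * -(Φ k * (1 - P) * (Φ (k + 1))⁻¹)
        = -(Φ (k + 1) * (1 - P) * (Φ (k + 1))⁻¹) := by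
      rw [mul_neg]
      simp only [← Matrix.mul_assoc]
      rw [← hΦ]
    rw [e1, Matrix.mul_sub, Matrix.mul_one, Matrix.sub_mul, hu]
    abel
  · rw [green, green, if_neg (by linarith), if_neg (by linarith), if_neg (by omega)]
    rw [add_zero, hΦ, mul_neg]
    simp only [Matrix.mul_assoc]
variable {q : ℕ}

lemma green_bound (Φ : ℤ → Mat q) (P : Mat q) (K ρ : ℝ)
    (hdich : ∀ n k : ℤ,
      (k < n → ‖green Φ P n k‖ ≤ K * ρ ^ (n - k)) ∧
      (n ≤ k → ‖green Φ P n k‖ ≤ K * ρ ^ (k - n)))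
    (n k : ℤ) : ‖green Φ P n k‖ ≤ K * ρ ^ (n - k).natAbs := by
  rcases lt_or_ge k n with hk | hk
  · have := (hdich n k).1 hk
    rwa [show ((n - k : ℤ)) = ((n - k).natAbs : ℤ) by
        rw [Int.natAbs_of_nonneg (by omega)], zpow_natCast] at this
  · have := (hdich n k).2 hk
    rwa [show ((k - n : ℤ)) = (((n - k)).natAbs : ℤ) by
        omega, zpow_natCast] at this

section core
variable {q : ℕ} (H Φ : ℤ → Mat q) (P : Mat q) (K ρ : ℝ)

lemma bound_summable (hρ0 : 0 < ρ) (hρ1 : ρ < 1) (M : ℝ) (n : ℤ) :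
    Summable (fun k : ℤ => K * ρ ^ (n - k).natAbs * M) := by
  have hbase : Summable (fun j : ℤ => ρ ^ j.natAbs) := summable_natAbs hρ0.le hρ1
  have h2 : Summable ((fun j : ℤ => ρ ^ j.natAbs) ∘ (Equiv.subLeft n)) :=
    hbase.comp_injective (Equiv.subLeft n).injective
  simpa [Function.comp] using (h2.mul_left K).mul_right M

lemma bound_tsum_le (hK : 0 < K) (hρ0 : 0 < ρ) (hρ1 : ρ < 1) (M : ℝ) (hM : 0 ≤ M) (n : ℤ) :
    ∑' k : ℤ, K * ρ ^ (n - k).natAbs * M ≤ 2 * K / (1 - ρ) * M := by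
  have hbase : Summable (fun j : ℤ => ρ ^ j.natAbs) := summable_natAbs hρ0.le hρ1
  have h1 : ∑' k : ℤ, K * ρ ^ (n - k).natAbs * M
      = K * M * ∑' k : ℤ, ((fun j : ℤ => ρ ^ j.natAbs) ((Equiv.subLeft n) k)) := by
    rw [← tsum_mul_left]
    congr 1; funext k; simp [Equiv.subLeft]; ring
  rw [h1, (Equiv.subLeft n).tsum_eq (fun j : ℤ => ρ ^ j.natAbs)]
  have h2 := tsum_natAbs_le hρ0.le hρ1
  have : K * M * (∑' j : ℤ, ρ ^ j.natAbs) ≤ K * M * (2 / (1 - ρ)) := by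
    apply mul_le_mul_of_nonneg_left h2 (by positivity)
  calc K * M * (∑' j : ℤ, ρ ^ j.natAbs) ≤ K * M * (2 / (1 - ρ)) := this
    _ = 2 * K / (1 - ρ) * M := by ring

variable (hdich : ∀ n k : ℤ,
      (k < n → ‖green Φ P n k‖ ≤ K * ρ ^ (n - k)) ∧
      (n ≤ k → ‖green Φ P n k‖ ≤ K * ρ ^ (k - n)))

include hdich

lemma core_term_bound (hK : 0 < K) (g : ℤ → Vec q) (M : ℝ) (hg : ∀ k, ‖g k‖ ≤ M) (n k : ℤ) :
    ‖aMul (green Φ P n k) (g k)‖ ≤ K * ρ ^ (n - k).natAbs * M := by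
  calc ‖aMul (green Φ P n k) (g k)‖ ≤ ‖green Φ P n k‖ * ‖g k‖ := aMul_norm_le _ _
    _ ≤ K * ρ ^ (n - k).natAbs * M := by
        apply mul_le_mul (green_bound Φ P K ρ hdich n k) (hg k) (norm_nonneg _)
        have := norm_nonneg (green Φ P n k)
        nlinarith [green_bound Φ P K ρ hdich n k]

lemma core_summable (hK : 0 < K) (hρ0 : 0 < ρ) (hρ1 : ρ < 1)
    (g : ℤ → Vec q) (M : ℝ) (hg : ∀ k, ‖g k‖ ≤ M) (n : ℤ) :
    Summable fun k : ℤ => ‖aMul (green Φ P n k) (g k)‖ :=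
  Summable.of_nonneg_of_le (fun k => norm_nonneg _)
    (fun k => core_term_bound Φ P K ρ hdich hK g M hg n k)
    (bound_summable K ρ hρ0 hρ1 M n)

lemma core_summable' (hK : 0 < K) (hρ0 : 0 < ρ) (hρ1 : ρ < 1)
    (g : ℤ → Vec q) (M : ℝ) (hg : ∀ k, ‖g k‖ ≤ M) (n : ℤ) :
    Summable fun k : ℤ => aMul (green Φ P n k) (g k) :=
  (core_summable Φ P K ρ hdich hK hρ0 hρ1 g M hg n).of_norm

lemma core_tsum_bound (hK : 0 < K) (hρ0 : 0 < ρ) (hρ1 : ρ < 1)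
    (g : ℤ → Vec q) (M : ℝ) (hg : ∀ k, ‖g k‖ ≤ M) (n : ℤ) :
    ‖∑' k : ℤ, aMul (green Φ P n k) (g k)‖ ≤ 2 * K / (1 - ρ) * M := by
  have hM : 0 ≤ M := le_trans (norm_nonneg _) (hg 0)
  calc ‖∑' k : ℤ, aMul (green Φ P n k) (g k)‖
      ≤ ∑' k : ℤ, ‖aMul (green Φ P n k) (g k)‖ :=
        norm_tsum_le_tsum_norm (core_summable Φ P K ρ hdich hK hρ0 hρ1 g M hg n)
    _ ≤ ∑' k : ℤ, K * ρ ^ (n - k).natAbs * M :=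
        Summable.tsum_le_tsum (fun k => core_term_bound Φ P K ρ hdich hK g M hg n k)
          (core_summable Φ P K ρ hdich hK hρ0 hρ1 g M hg n)
          (bound_summable K ρ hρ0 hρ1 M n)
    _ ≤ 2 * K / (1 - ρ) * M := bound_tsum_le K ρ hK hρ0 hρ1 M hM n


lemma core_solution (hΦinv : ∀ n : ℤ, IsUnit (Φ n)) (hΦ : ∀ n : ℤ, Φ (n + 1) = H n * Φ n)
    (hK : 0 < K) (hρ0 : 0 < ρ) (hρ1 : ρ < 1)
    (g : ℤ → Vec q) (M : ℝ) (hg : ∀ k, ‖g k‖ ≤ M) (n : ℤ) :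
    (∑' k : ℤ, aMul (green Φ P (n + 1) k) (g k))
      = aMul (H n) (∑' k : ℤ, aMul (green Φ P n k) (g k)) + g n := by
  have hs := core_summable' Φ P K ρ hdich hK hρ0 hρ1 g M hg n
  have e1 : ∀ k : ℤ, aMul (green Φ P (n + 1) k) (g k)
      = aMul (H n) (aMul (green Φ P n k) (g k)) + (if k = n then g n else 0) := by
    intro k
    rw [green_succ Φ H P hΦinv hΦ n k, aMul_add, aMul_mul]
    congr 1
    by_cases hk : k = n
    · subst hk; simp [aMul_one]
    · simp [hk, aMul_zero]
  have hs1 : Summable (fun k : ℤ => aMul (H n) (aMul (green Φ P n k) (g k))) :=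
    hs.map (aCLM (H n) : Vec q →L[ℂ] Vec q) (aCLM (H n)).continuous
  have hs2 : Summable (fun k : ℤ => if k = n then g n else (0 : Vec q)) := by
    apply summable_of_ne_finset_zero (s := {n})
    intro k hk
    simp only [Finset.mem_singleton] at hk
    simp [hk]
  calc (∑' k : ℤ, aMul (green Φ P (n + 1) k) (g k))
      = ∑' k : ℤ, (aMul (H n) (aMul (green Φ P n k) (g k)) + (if k = n then g n else 0)) :=
        tsum_congr e1
    _ = (∑' k : ℤ, aMul (H n) (aMul (green Φ P n k) (g k)))
        + ∑' k : ℤ, (if k = n then g n else (0 : Vec q)) := Summable.tsum_add hs1 hs2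
    _ = aMul (H n) (∑' k : ℤ, aMul (green Φ P n k) (g k)) + g n := by
        rw [tsum_ite_eq]
        congr 1
        exact ((aCLM (H n) : Vec q →L[ℂ] Vec q).map_tsum hs).symm

omit hdich in
lemma homog_prop (hΦinv : ∀ n : ℤ, IsUnit (Φ n)) (hΦ : ∀ n : ℤ, Φ (n + 1) = H n * Φ n)
    (d : ℤ → Vec q) (hd : ∀ n : ℤ, d (n + 1) = aMul (H n) (d n)) :
    ∀ m n : ℤ, m ≤ n → d n = aMul (Φ n * (Φ m)⁻¹) (d m) := by
  intro m n hmn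
  have key : ∀ p : ℕ, d (m + p) = aMul (Φ (m + p) * (Φ m)⁻¹) (d m) := by
    intro p
    induction p with
    | zero =>
        simp only [Nat.cast_zero, add_zero]
        rw [Matrix.mul_nonsing_inv _ ((Matrix.isUnit_iff_isUnit_det _).mp (hΦinv m)), aMul_one]
    | succ p ih =>
        have hcast : (m + ((p : ℕ) + 1 : ℕ) : ℤ) = (m + p) + 1 := by push_cast; ring
        rw [hcast, hd, ih, ← aMul_mul, hΦ, Matrix.mul_assoc]
  have hn : n = m + ((n - m).toNat : ℤ) := by omega
  rw [hn]
  exact key _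

lemma homog_zero (hΦinv : ∀ n : ℤ, IsUnit (Φ n)) (hΦ : ∀ n : ℤ, Φ (n + 1) = H n * Φ n)
    (hK : 0 < K) (hρ0 : 0 < ρ) (hρ1 : ρ < 1)
    (d : ℤ → Vec q) (hd : ∀ n : ℤ, d (n + 1) = aMul (H n) (d n))
    (C : ℝ) (hC : ∀ n : ℤ, ‖d n‖ ≤ C) : ∀ n : ℤ, d n = 0 := by
  intro n
  have hC0 : 0 ≤ C := le_trans (norm_nonneg _) (hC 0)
  have hdet : ∀ m : ℤ, IsUnit (Φ m).det :=
    fun m => (Matrix.isUnit_iff_isUnit_det _).mp (hΦinv m)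
  set v := aMul (Φ n * P * (Φ n)⁻¹) (d n) with hvdef
  set w := aMul (Φ n * (1 - P) * (Φ n)⁻¹) (d n) with hwdef
  have hvw : d n = v + w := by
    rw [hvdef, hwdef, ← aMul_add]
    have : Φ n * P * (Φ n)⁻¹ + Φ n * (1 - P) * (Φ n)⁻¹ = 1 := by
      rw [Matrix.mul_sub, Matrix.mul_one, Matrix.sub_mul, add_sub_cancel,
        Matrix.mul_nonsing_inv _ (hdet n)]
    rw [this, aMul_one]
  have key : ∀ k : ℤ, Φ n * P * (Φ n)⁻¹ * (Φ n * (Φ (k + 1))⁻¹) = Φ n * P * (Φ (k + 1))⁻¹ := by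
    intro k
    rw [Matrix.mul_assoc (Φ n * P) ((Φ n)⁻¹) _, ← Matrix.mul_assoc ((Φ n)⁻¹) (Φ n) _,
      Matrix.nonsing_inv_mul _ (hdet n), Matrix.one_mul]
  have key2 : ∀ k : ℤ, -(Φ n * (1 - P) * (Φ (k + 1))⁻¹) * (Φ (k + 1) * (Φ n)⁻¹)
      = -(Φ n * (1 - P) * (Φ n)⁻¹) := by
    intro k
    rw [Matrix.neg_mul, Matrix.mul_assoc (Φ n * (1 - P)) ((Φ (k + 1))⁻¹) _,
      ← Matrix.mul_assoc ((Φ (k + 1))⁻¹) (Φ (k + 1)) _,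
      Matrix.nonsing_inv_mul _ (hdet (k + 1)), Matrix.one_mul]
  have hv : ∀ j : ℕ, ‖v‖ ≤ K * C * ρ ^ (j + 1) := by
    intro j
    set k : ℤ := n - 1 - j with hkdef
    have hk : k < n := by omega
    have h1 : d n = aMul (Φ n * (Φ (k + 1))⁻¹) (d (k + 1)) :=
      homog_prop H Φ hΦinv hΦ d hd (k + 1) n (by omega)
    have h2 : v = aMul (green Φ P n k) (d (k + 1)) := by
      rw [green, if_pos hk, hvdef, h1, ← aMul_mul, key k]
    have h3 := (hdich n k).1 hk
    have h4 : (ρ : ℝ) ^ (n - k) = ρ ^ (j + 1) := by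
      rw [show n - k = ((j + 1 : ℕ) : ℤ) by omega, zpow_natCast]
    calc ‖v‖ = ‖aMul (green Φ P n k) (d (k + 1))‖ := by rw [h2]
      _ ≤ ‖green Φ P n k‖ * ‖d (k + 1)‖ := aMul_norm_le _ _
      _ ≤ (K * ρ ^ (n - k)) * C := by
          apply mul_le_mul h3 (hC _) (norm_nonneg _)
          calc (0:ℝ) ≤ ‖green Φ P n k‖ := norm_nonneg _
            _ ≤ K * ρ ^ (n - k) := h3
      _ = K * C * ρ ^ (j + 1) := by rw [h4]; ring
  have hw : ∀ j : ℕ, ‖w‖ ≤ K * C * ρ ^ j := by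
    intro j
    set k : ℤ := n + j with hkdef
    have hk : ¬ (k < n) := by omega
    have h1 : d (k + 1) = aMul (Φ (k + 1) * (Φ n)⁻¹) (d n) :=
      homog_prop H Φ hΦinv hΦ d hd n (k + 1) (by omega)
    have h2 : -w = aMul (green Φ P n k) (d (k + 1)) := by
      rw [green, if_neg hk, h1, ← aMul_mul, key2 k, hwdef, aMul_neg]
    have h3 := (hdich n k).2 (by omega)
    have h4 : (ρ : ℝ) ^ (k - n) = ρ ^ j := by
      rw [show k - n = ((j : ℕ) : ℤ) by omega, zpow_natCast]
    calc ‖w‖ = ‖aMul (green Φ P n k) (d (k + 1))‖ := by rw [← h2, norm_neg]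
      _ ≤ ‖green Φ P n k‖ * ‖d (k + 1)‖ := aMul_norm_le _ _
      _ ≤ (K * ρ ^ (k - n)) * C := by
          apply mul_le_mul h3 (hC _) (norm_nonneg _)
          calc (0:ℝ) ≤ ‖green Φ P n k‖ := norm_nonneg _
            _ ≤ K * ρ ^ (k - n) := h3
      _ = K * C * ρ ^ j := by rw [h4]; ring
  have hlim : Filter.Tendsto (fun j : ℕ => K * C * ρ ^ j) Filter.atTop (nhds 0) := by
    have := tendsto_pow_atTop_nhds_zero_of_lt_one hρ0.le hρ1
    simpa using this.const_mul (K * C)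
  have hv0 : v = 0 := by
    rw [← norm_le_zero_iff]
    apply ge_of_tendsto hlim
    filter_upwards with j
    calc ‖v‖ ≤ K * C * ρ ^ (j + 1) := hv j
      _ ≤ K * C * ρ ^ j := by
          apply mul_le_mul_of_nonneg_left _ (by positivity)
          exact pow_le_pow_of_le_one hρ0.le hρ1.le (by omega)
  have hw0 : w = 0 := by
    rw [← norm_le_zero_iff]
    exact ge_of_tendsto hlim (Filter.Eventually.of_forall hw)
  rw [hvw, hv0, hw0, add_zero]

lemma unique_solution (hΦinv : ∀ n : ℤ, IsUnit (Φ n)) (hΦ : ∀ n : ℤ, Φ (n + 1) = H n * Φ n)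
    (hK : 0 < K) (hρ0 : 0 < ρ) (hρ1 : ρ < 1)
    (g : ℤ → Vec q) (c₁ c₂ : ℤ → Vec q)
    (h1 : ∀ n : ℤ, c₁ (n + 1) = aMul (H n) (c₁ n) + g n)
    (h2 : ∀ n : ℤ, c₂ (n + 1) = aMul (H n) (c₂ n) + g n)
    (C₁ : ℝ) (hC1 : ∀ n : ℤ, ‖c₁ n‖ ≤ C₁) (C₂ : ℝ) (hC2 : ∀ n : ℤ, ‖c₂ n‖ ≤ C₂) :
    c₁ = c₂ := by
  have hd : ∀ n : ℤ, (c₁ - c₂) (n + 1) = aMul (H n) ((c₁ - c₂) n) := by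
    intro n
    simp only [Pi.sub_apply, h1 n, h2 n]
    have : aMul (H n) (c₁ n - c₂ n) = aMul (H n) (c₁ n) - aMul (H n) (c₂ n) := aMul_v_sub _ _ _
    rw [this]
    abel
  have hb : ∀ n : ℤ, ‖(c₁ - c₂) n‖ ≤ C₁ + C₂ := by
    intro n
    calc ‖(c₁ - c₂) n‖ ≤ ‖c₁ n‖ + ‖c₂ n‖ := norm_sub_le _ _
      _ ≤ C₁ + C₂ := add_le_add (hC1 n) (hC2 n)
  have := homog_zero H Φ P K ρ hdich hΦinv hΦ hK hρ0 hρ1 (c₁ - c₂) hd (C₁ + C₂) hb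
  funext n
  have h := this n
  simpa [sub_eq_zero] using h

end core

section ap
variable {E F : Type*} [NormedAddCommGroup E] [NormedAddCommGroup F]

lemma ap_net {f : ℤ → E} (hf : APZ f) {ε : ℝ} (hε : 0 < ε) :
    ∃ l : ℤ, 0 ≤ l ∧ ∀ τ : ℤ, ∃ s : ℤ, 0 ≤ s ∧ s ≤ l ∧
      ∀ n : ℤ, ‖f (n + τ) - f (n + s)‖ ≤ ε := by
  obtain ⟨l, hl, hIcc⟩ := hf ε hε
  refine ⟨l, hl.le, fun τ => ?_⟩
  obtain ⟨p, hp⟩ := hIcc (τ - l)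
  have hpT : ∀ n : ℤ, ‖f (n + p) - f n‖ ≤ ε := hp.1
  have hp1 : τ - l ≤ p := hp.2.1
  have hp2 : p ≤ τ - l + l := hp.2.2
  refine ⟨τ - p, by omega, by omega, fun n => ?_⟩
  have := hpT (n + (τ - p))
  have harg : n + (τ - p) + p = n + τ := by ring
  rwa [harg] at this

lemma ap_bounded {f : ℤ → E} (hf : APZ f) : ∃ M : ℝ, 0 ≤ M ∧ ∀ n : ℤ, ‖f n‖ ≤ M := by
  obtain ⟨l, hl0, hnet⟩ := ap_net hf one_pos
  have hTne : (Finset.Icc (0:ℤ) l).Nonempty := ⟨0, by simp [hl0]⟩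
  set M0 := ((Finset.Icc (0:ℤ) l).image fun s => ‖f s‖).max' (hTne.image _) with hM0
  have hle : ∀ s ∈ Finset.Icc (0:ℤ) l, ‖f s‖ ≤ M0 := by
    intro s hs
    rw [hM0]
    exact Finset.le_max' _ _ (Finset.mem_image_of_mem (fun s => ‖f s‖) hs)
  have h0 : 0 ≤ M0 := le_trans (norm_nonneg (f 0)) (hle 0 (by simp [hl0]))
  refine ⟨M0 + 1, by linarith, fun n => ?_⟩
  obtain ⟨s, hs0, hsl, hcl⟩ := hnet n
  have h1 := hcl 0
  simp only [zero_add] at h1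
  have h2 : ‖f n‖ ≤ ‖f n - f s‖ + ‖f s‖ := by
    calc ‖f n‖ = ‖(f n - f s) + f s‖ := by rw [sub_add_cancel]
      _ ≤ ‖f n - f s‖ + ‖f s‖ := norm_add_le _ _
  have h3 : ‖f s‖ ≤ M0 := hle s (by simp [Finset.mem_Icc]; omega)
  linarith

open Classical in
noncomputable def repAux (f : ℤ → E) (g : ℤ → F) (ε : ℝ) (a b : ℤ) : ℤ :=
  if h : ∃ τ : ℤ, (∀ n : ℤ, ‖f (n + τ) - f (n + a)‖ ≤ ε) ∧
      (∀ n : ℤ, ‖g (n + τ) - g (n + b)‖ ≤ ε) then h.choose else 0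

lemma repAux_spec {f : ℤ → E} {g : ℤ → F} {ε : ℝ} {a b : ℤ}
    (hex : ∃ τ : ℤ, (∀ n : ℤ, ‖f (n + τ) - f (n + a)‖ ≤ ε) ∧
      (∀ n : ℤ, ‖g (n + τ) - g (n + b)‖ ≤ ε)) :
    (∀ n : ℤ, ‖f (n + repAux f g ε a b) - f (n + a)‖ ≤ ε) ∧
      (∀ n : ℤ, ‖g (n + repAux f g ε a b) - g (n + b)‖ ≤ ε) := by
  classical
  rw [repAux]
  rw [dif_pos hex]
  exact hex.choose_spec

lemma common_periods {f : ℤ → E} {g : ℤ → F} (hf : APZ f) (hg : APZ g)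
    {ε : ℝ} (hε : 0 < ε) :
    ∃ l : ℤ, 0 < l ∧ ∀ m : ℤ, ∃ τ ∈ Set.Icc m (m + l),
      (∀ n : ℤ, ‖f (n + τ) - f n‖ ≤ ε) ∧ (∀ n : ℤ, ‖g (n + τ) - g n‖ ≤ ε) := by
  have hε2 : 0 < ε / 2 := by linarith
  obtain ⟨l1, hl1, hnet1⟩ := ap_net hf hε2
  obtain ⟨l2, hl2, hnet2⟩ := ap_net hg hε2
  classical
  set T : Finset ℤ :=
    (Finset.Icc (0:ℤ) l1 ×ˢ Finset.Icc (0:ℤ) l2).image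
      (fun p => repAux f g (ε / 2) p.1 p.2) with hT
  have hTne : T.Nonempty :=
    Finset.Nonempty.image ⟨(0, 0), by simp [Finset.mem_product, hl1, hl2]⟩ _
  set B := (T.image fun t => |t|).max' (hTne.image _) with hB
  have hBmem : ∀ t ∈ T, |t| ≤ B := fun t ht => Finset.le_max' _ _ (Finset.mem_image_of_mem _ ht)
  obtain ⟨t0, ht0⟩ := hTne
  have hB0 : 0 ≤ B := le_trans (abs_nonneg t0) (hBmem t0 ht0)
  refine ⟨2 * B + 1, by linarith, fun m => ?_⟩
  set τ := m + B with hτ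
  obtain ⟨s1, hs10, hs1l, hc1⟩ := hnet1 τ
  obtain ⟨s2, hs20, hs2l, hc2⟩ := hnet2 τ
  have hex : ∃ τ' : ℤ, (∀ n : ℤ, ‖f (n + τ') - f (n + s1)‖ ≤ ε / 2) ∧
      (∀ n : ℤ, ‖g (n + τ') - g (n + s2)‖ ≤ ε / 2) := ⟨τ, hc1, hc2⟩
  set t := repAux f g (ε / 2) s1 s2 with ht
  have hQt := repAux_spec hex
  have htT : t ∈ T := by
    rw [hT]
    exact Finset.mem_image.mpr ⟨(s1, s2), by simp [Finset.mem_product, Finset.mem_Icc]; omega, rfl⟩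
  have htB : |t| ≤ B := hBmem t htT
  rw [abs_le] at htB
  refine ⟨τ - t, ⟨by omega, by omega⟩, ?_, ?_⟩
  · intro n
    have a1 := hc1 (n - t)
    have a2 := hQt.1 (n - t)
    have harg1 : n - t + τ = n + (τ - t) := by ring
    have harg2 : n - t + t = n := by ring
    calc ‖f (n + (τ - t)) - f n‖
        = ‖(f (n - t + τ) - f (n - t + s1)) - (f (n - t + t) - f (n - t + s1))‖ := by
          rw [harg1, harg2]; congr 1; abel
      _ ≤ ‖f (n - t + τ) - f (n - t + s1)‖ + ‖f (n - t + t) - f (n - t + s1)‖ :=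
          norm_sub_le _ _
      _ ≤ ε / 2 + ε / 2 := add_le_add a1 a2
      _ = ε := by ring
  · intro n
    have a1 := hc2 (n - t)
    have a2 := hQt.2 (n - t)
    have harg1 : n - t + τ = n + (τ - t) := by ring
    have harg2 : n - t + t = n := by ring
    calc ‖g (n + (τ - t)) - g n‖
        = ‖(g (n - t + τ) - g (n - t + s2)) - (g (n - t + t) - g (n - t + s2))‖ := by
          rw [harg1, harg2]; congr 1; abel
      _ ≤ ‖g (n - t + τ) - g (n - t + s2)‖ + ‖g (n - t + t) - g (n - t + s2)‖ :=
          norm_sub_le _ _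
      _ ≤ ε / 2 + ε / 2 := add_le_add a1 a2
      _ = ε := by ring

end ap

/-- for an almost periodic `H` whose difference equation has an exponential
dichotomy `(Π, K, ρ)` and an almost periodic `h`, the series `c(n) = Σ_k 𝒢(n,k) h(k)`
converges absolutely, `c` is the unique bounded solution of `c(n+1) = H(n)c(n) + h(n)`,
`c` is almost periodic and `sup_n ‖c n‖ ≤ (2K/(1-ρ)) sup_n ‖h n‖`. -/
theorem ap_solution_of_linear_difference_equation {q : ℕ} (hq : 1 ≤ q)
    (H : ℤ → Mat q) (hHap : APZ H) (hHinv : ∀ n : ℤ, IsUnit (H n))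
    (Φ : ℤ → Mat q) (hΦinv : ∀ n : ℤ, IsUnit (Φ n))
    (hΦ : ∀ n : ℤ, Φ (n + 1) = H n * Φ n)
    (P : Mat q) (hP : P * P = P)
    (K ρ : ℝ) (hK : 0 < K) (hρ0 : 0 < ρ) (hρ1 : ρ < 1)
    (hdich : ∀ n k : ℤ,
      (k < n → ‖green Φ P n k‖ ≤ K * ρ ^ (n - k)) ∧
      (n ≤ k → ‖green Φ P n k‖ ≤ K * ρ ^ (k - n)))
    (h : ℤ → Vec q) (hhap : APZ h) :
    (∀ n : ℤ, Summable fun k : ℤ => ‖aMul (green Φ P n k) (h k)‖) ∧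
    (let c : ℤ → Vec q := fun n => ∑' k : ℤ, aMul (green Φ P n k) (h k);
      (∀ n : ℤ, c (n + 1) = aMul (H n) (c n) + h n) ∧
      (∃ C : ℝ, ∀ n : ℤ, ‖c n‖ ≤ C) ∧
      (∀ c' : ℤ → Vec q, (∀ n : ℤ, c' (n + 1) = aMul (H n) (c' n) + h n) →
        (∃ C : ℝ, ∀ n : ℤ, ‖c' n‖ ≤ C) → c' = c) ∧
      APZ c ∧
      (∀ n : ℤ, ‖c n‖ ≤ 2 * K / (1 - ρ) * ⨆ m : ℤ, ‖h m‖)) := by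
  classical
  obtain ⟨Mh, hMh0, hMh⟩ := ap_bounded hhap
  have hsum : ∀ n : ℤ, Summable fun k : ℤ => ‖aMul (green Φ P n k) (h k)‖ :=
    fun n => core_summable Φ P K ρ hdich hK hρ0 hρ1 h Mh hMh n
  refine ⟨hsum, ?_⟩
  intro c
  have hc : ∀ n : ℤ, c n = ∑' k : ℤ, aMul (green Φ P n k) (h k) := fun n => rfl
  have hsol : ∀ n : ℤ, c (n + 1) = aMul (H n) (c n) + h n := by
    intro n
    rw [hc, hc]
    exact core_solution H Φ P K ρ hdich hΦinv hΦ hK hρ0 hρ1 h Mh hMh n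
  set Mc := 2 * K / (1 - ρ) * Mh with hMcdef
  have hfrac : 0 ≤ 2 * K / (1 - ρ) := div_nonneg (by linarith) (by linarith)
  have hMc0 : 0 ≤ Mc := mul_nonneg hfrac hMh0
  have hcb : ∀ n : ℤ, ‖c n‖ ≤ Mc := by
    intro n
    rw [hc]
    exact core_tsum_bound Φ P K ρ hdich hK hρ0 hρ1 h Mh hMh n
  have huniq : ∀ c' : ℤ → Vec q, (∀ n : ℤ, c' (n + 1) = aMul (H n) (c' n) + h n) →
      (∃ C : ℝ, ∀ n : ℤ, ‖c' n‖ ≤ C) → c' = c := by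
    intro c' hsol' ⟨C', hC'⟩
    exact unique_solution H Φ P K ρ hdich hΦinv hΦ hK hρ0 hρ1 h c' c hsol' hsol C' hC' Mc hcb
  refine ⟨hsol, ⟨Mc, hcb⟩, huniq, ?_, ?_⟩
  · -- almost periodicity of c
    intro ε hε
    set D := 2 * K / (1 - ρ) * (Mc + 1) + 1 with hDdef
    have hD0 : 0 < D := by
      have h1 : 0 ≤ 2 * K / (1 - ρ) * (Mc + 1) := mul_nonneg hfrac (by linarith)
      rw [hDdef]; linarith
    set δ := ε / D with hδdef
    have hδ : 0 < δ := div_pos hε hD0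
    obtain ⟨l, hl, hcom⟩ := common_periods hHap hhap hδ
    refine ⟨l, hl, fun m => ?_⟩
    obtain ⟨τ, hτmem, hτH, hτh⟩ := hcom m
    refine ⟨τ, ?_, hτmem⟩
    intro n
    set g' : ℤ → Vec q := fun k => aMul (H (k + τ) - H k) (c (k + τ)) + (h (k + τ) - h k)
      with hg'def
    have hg'b : ∀ k : ℤ, ‖g' k‖ ≤ δ * (Mc + 1) := by
      intro k
      have b1 : ‖aMul (H (k + τ) - H k) (c (k + τ))‖ ≤ δ * Mc := by
        calc ‖aMul (H (k + τ) - H k) (c (k + τ))‖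
            ≤ ‖H (k + τ) - H k‖ * ‖c (k + τ)‖ := aMul_norm_le _ _
          _ ≤ δ * Mc := mul_le_mul (hτH k) (hcb _) (norm_nonneg _) hδ.le
      have b2 : ‖h (k + τ) - h k‖ ≤ δ := hτh k
      calc ‖g' k‖ ≤ ‖aMul (H (k + τ) - H k) (c (k + τ))‖ + ‖h (k + τ) - h k‖ :=
            norm_add_le _ _
        _ ≤ δ * Mc + δ := add_le_add b1 b2
        _ = δ * (Mc + 1) := by ring
    set d : ℤ → Vec q := fun k => c (k + τ) - c k with hddef
    have hdsol : ∀ k : ℤ, d (k + 1) = aMul (H k) (d k) + g' k := by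
      intro k
      have e1 : c (k + 1 + τ) = aMul (H (k + τ)) (c (k + τ)) + h (k + τ) := by
        have := hsol (k + τ)
        rwa [show k + τ + 1 = k + 1 + τ by ring] at this
      have e2 : aMul (H (k + τ)) (c (k + τ))
          = aMul (H k) (c (k + τ)) + aMul (H (k + τ) - H k) (c (k + τ)) := by
        have em : H (k + τ) = H k + (H (k + τ) - H k) := by abel
        rw [← aMul_add, ← em]
      simp only [hddef, hg'def]
      rw [e1, e2, hsol k, aMul_v_sub]
      abel
    have hdb : ∀ k : ℤ, ‖d k‖ ≤ Mc + Mc := by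
      intro k
      calc ‖d k‖ ≤ ‖c (k + τ)‖ + ‖c k‖ := norm_sub_le _ _
        _ ≤ Mc + Mc := add_le_add (hcb _) (hcb _)
    set e : ℤ → Vec q := fun k => ∑' j : ℤ, aMul (green Φ P k j) (g' j) with hedef
    have hesol : ∀ k : ℤ, e (k + 1) = aMul (H k) (e k) + g' k := by
      intro k
      exact core_solution H Φ P K ρ hdich hΦinv hΦ hK hρ0 hρ1 g' (δ * (Mc + 1)) hg'b k
    have heb : ∀ k : ℤ, ‖e k‖ ≤ 2 * K / (1 - ρ) * (δ * (Mc + 1)) := fun k =>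
      core_tsum_bound Φ P K ρ hdich hK hρ0 hρ1 g' (δ * (Mc + 1)) hg'b k
    have hde : d = e :=
      unique_solution H Φ P K ρ hdich hΦinv hΦ hK hρ0 hρ1 g' d e hdsol hesol
        (Mc + Mc) hdb (2 * K / (1 - ρ) * (δ * (Mc + 1))) heb
    have : ‖c (n + τ) - c n‖ = ‖e n‖ := by rw [← hde]
    rw [this]
    calc ‖e n‖ ≤ 2 * K / (1 - ρ) * (δ * (Mc + 1)) := heb n
      _ = (D - 1) * δ := by rw [hDdef]; ring
      _ ≤ D * δ := by nlinarith
      _ = ε := by rw [hδdef]; field_simp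
  · -- sup bound
    intro n
    have hbdd : BddAbove (Set.range fun m : ℤ => ‖h m‖) := ⟨Mh, by rintro x ⟨m, rfl⟩; exact hMh m⟩
    have hle : ∀ k : ℤ, ‖h k‖ ≤ ⨆ m : ℤ, ‖h m‖ := fun k => le_ciSup hbdd k
    rw [hc]
    exact core_tsum_bound Φ P K ρ hdich hK hρ0 hρ1 h (⨆ m : ℤ, ‖h m‖) hle n
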